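/- Let F be a finite set of integers such that any two distinct elements of F differ by at least 3. For each n ∈ F let f_n : M → ℝ be Lipschitz with Lipschitz constant at most 1 and f_n(0) = 0. Then the function g = Σ_{n∈F} f_n·Λ_n is Lipschitz with Lipschitz constant at most 15. -/

import Mathlib

open Filter Metric Topology NNReal


variable {M : Type*} [MetricSpace M]

/-- The "tent" function `Λ_n`, supported on the annulus `2^(n-1) < d(x,0) < 2^(n+1)`,
equal to `1` on the sphere `d(x,0) = 2^n` and affine in `d(x,0)` in between. -/
noncomputable def Lam (base : M) (n : ℤ) (x : M) : ℝ :=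
  max 0 (min ((2:ℝ) ^ (1 - n) * dist x base - 1) (2 - (2:ℝ) ^ (-n) * dist x base))

/-- The "plateau" function `Π_n`, equal to `1` on the annulus `2^(-n) ≤ d(x,0) ≤ 2^n`,
vanishing for `d(x,0) ≤ 2^(-(n+1))` and `d(x,0) ≥ 2^(n+1)`, affine in between. -/
noncomputable def Pla (base : M) (n : ℕ) (x : M) : ℝ :=
  max 0 (min 1 (min ((2:ℝ) ^ ((n:ℤ) + 1) * dist x base - 1)
    (2 - (2:ℝ) ^ (-(n:ℤ)) * dist x base)))

/-- The cutoff function `h_n`, equal to `1` on the ball `d(x,0) ≤ 2^n`, vanishing for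
`d(x,0) ≥ 2^(n+1)`, and affine in `d(x,0)` in between. -/
noncomputable def hfun (base : M) (n : ℤ) (x : M) : ℝ :=
  max 0 (min 1 (2 - (2:ℝ) ^ (-n) * dist x base))


lemma lam_nonneg (base : M) (n : ℤ) (x : M) : 0 ≤ Lam base n x := le_max_left _ _

lemma lam_le_one (base : M) (n : ℤ) (x : M) : Lam base n x ≤ 1 := by
  unfold Lam
  apply max_le zero_le_one
  rcases le_total (dist x base) ((2:ℝ)^n) with h | h
  · refine le_trans (min_le_left _ _) ?_
    have h1 : (2:ℝ)^(1-n) * dist x base ≤ 2^(1-n) * 2^n :=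
      mul_le_mul_of_nonneg_left h (by positivity)
    have h2 : (2:ℝ)^(1-n) * 2^n = 2 := by
      rw [← zpow_add₀ (by norm_num : (2:ℝ) ≠ 0)]; norm_num
    linarith
  · refine le_trans (min_le_right _ _) ?_
    have h1 : (2:ℝ)^(-n) * 2^n ≤ 2^(-n) * dist x base :=
      mul_le_mul_of_nonneg_left h (by positivity)
    have h2 : (2:ℝ)^(-n) * 2^n = 1 := by
      rw [← zpow_add₀ (by norm_num : (2:ℝ) ≠ 0)]; norm_num
    linarith

lemma lam_diff (base : M) (n : ℤ) (x y : M) :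
    |Lam base n x - Lam base n y| ≤ (2:ℝ)^(1-n) * dist x y := by
  unfold Lam
  have hd : |dist x base - dist y base| ≤ dist x y := abs_dist_sub_le x y base
  have key : |min ((2:ℝ) ^ (1 - n) * dist x base - 1) (2 - (2:ℝ) ^ (-n) * dist x base)
      - min ((2:ℝ) ^ (1 - n) * dist y base - 1) (2 - (2:ℝ) ^ (-n) * dist y base)|
      ≤ (2:ℝ)^(1-n) * dist x y := by
    refine le_trans (abs_min_sub_min_le_max _ _ _ _) (max_le ?_ ?_)
    · have : (2:ℝ) ^ (1 - n) * dist x base - 1 - ((2:ℝ) ^ (1 - n) * dist y base - 1)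
          = (2:ℝ)^(1-n) * (dist x base - dist y base) := by ring
      rw [this, abs_mul, abs_of_pos (by positivity : (0:ℝ) < 2^(1-n))]
      exact mul_le_mul_of_nonneg_left hd (by positivity)
    · have : 2 - (2:ℝ) ^ (-n) * dist x base - (2 - (2:ℝ) ^ (-n) * dist y base)
          = (2:ℝ)^(-n) * (dist y base - dist x base) := by ring
      have hd' : |dist y base - dist x base| ≤ dist x y := by
        rw [abs_sub_comm]; exact hd
      rw [this, abs_mul, abs_of_pos (by positivity : (0:ℝ) < 2^(-n))]
      have hle : (2:ℝ)^(-n) ≤ 2^(1-n) := by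
        apply zpow_le_zpow_right₀ one_le_two; omega
      calc (2:ℝ)^(-n) * |dist y base - dist x base| ≤ 2^(-n) * dist x y :=
            mul_le_mul_of_nonneg_left hd' (by positivity)
        _ ≤ 2^(1-n) * dist x y := mul_le_mul_of_nonneg_right hle dist_nonneg
  refine le_trans (abs_max_sub_max_le_max _ _ _ _) (max_le ?_ key)
  simpa using mul_nonneg (le_of_lt (by positivity : (0:ℝ) < 2^(1-n))) (dist_nonneg (x := x) (y := y))

lemma lam_support (base : M) (n : ℤ) (x : M) (h : Lam base n x ≠ 0) :
    (2:ℝ)^(n-1) < dist x base ∧ dist x base < 2^(n+1) := by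
  have hpos : 0 < min ((2:ℝ) ^ (1 - n) * dist x base - 1)
      (2 - (2:ℝ) ^ (-n) * dist x base) := by
    by_contra hc
    push_neg at hc
    exact h (by unfold Lam; exact max_eq_left hc)
  have h1 := lt_of_lt_of_le hpos (min_le_left _ _)
  have h2 := lt_of_lt_of_le hpos (min_le_right _ _)
  constructor
  · have e : (2:ℝ)^(n-1) * (2:ℝ)^(1-n) = 1 := by
      rw [← zpow_add₀ (by norm_num : (2:ℝ) ≠ 0)]
      have h' : n - 1 + (1 - n) = 0 := by ring
      rw [h']; norm_num
    have hp : (0:ℝ) < 2^(n-1) := by positivity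
    calc (2:ℝ)^(n-1) = 2^(n-1) * 1 := (mul_one _).symm
      _ < 2^(n-1) * (2^(1-n) * dist x base) :=
          mul_lt_mul_of_pos_left (by linarith) hp
      _ = dist x base := by rw [← mul_assoc, e, one_mul]
  · have e : (2:ℝ)^(-n) * (2:ℝ)^(n+1) = 2 := by
      rw [← zpow_add₀ (by norm_num : (2:ℝ) ≠ 0)]
      have h' : -n + (n + 1) = 1 := by ring
      rw [h']; norm_num
    have hp : (0:ℝ) < 2^(-n) := by positivity
    have h3 : (2:ℝ)^(-n) * dist x base < 2^(-n) * 2^(n+1) := by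
      rw [e]; linarith
    exact lt_of_mul_lt_mul_left h3 (le_of_lt hp)

lemma term_diff (base : M) (n : ℤ) (x y : M) (f : M → ℝ)
    (hf : LipschitzWith 1 f) (hf0 : f base = 0) :
    |f x * Lam base n x - f y * Lam base n y| ≤ 5 * dist x y := by
  have hfd : ∀ a b : M, |f a - f b| ≤ dist a b := by
    intro a b
    have := hf.dist_le_mul a b
    rwa [Real.dist_eq, NNReal.coe_one, one_mul] at this
  have hfb : ∀ a : M, Lam base n a ≠ 0 → |f a| ≤ (2:ℝ)^(n+1) := by
    intro a ha
    have := (lam_support base n a ha).2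
    calc |f a| = |f a - f base| := by rw [hf0, sub_zero]
      _ ≤ dist a base := hfd a base
      _ ≤ (2:ℝ)^(n+1) := le_of_lt this
  have hpow : (2:ℝ)^(n+1) * (2:ℝ)^(1-n) = 4 := by
    rw [← zpow_add₀ (by norm_num : (2:ℝ) ≠ 0)]
    have h2 : n + 1 + (1 - n) = 2 := by ring
    rw [h2]; norm_num
  by_cases hx : Lam base n x = 0
  · by_cases hy : Lam base n y = 0
    · simp [hx, hy]
    · have : f x * Lam base n x - f y * Lam base n y
          = (f x - f y) * Lam base n x + f y * (Lam base n x - Lam base n y) := by ring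
      rw [this]
      refine le_trans (abs_add_le _ _) ?_
      rw [abs_mul, abs_mul]
      have b1 : |f x - f y| * |Lam base n x| ≤ dist x y * 1 := by
        apply mul_le_mul (hfd x y) _ (abs_nonneg _) dist_nonneg
        rw [abs_of_nonneg (lam_nonneg base n x)]; exact lam_le_one base n x
      have b2 : |f y| * |Lam base n x - Lam base n y| ≤ (2:ℝ)^(n+1) * ((2:ℝ)^(1-n) * dist x y) :=
        mul_le_mul (hfb y hy) (lam_diff base n x y) (abs_nonneg _) (by positivity)
      have : (2:ℝ)^(n+1) * ((2:ℝ)^(1-n) * dist x y) = 4 * dist x y := by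
        rw [← mul_assoc, hpow]
      linarith
  · have : f x * Lam base n x - f y * Lam base n y
        = (f x - f y) * Lam base n y + f x * (Lam base n x - Lam base n y) := by ring
    rw [this]
    refine le_trans (abs_add_le _ _) ?_
    rw [abs_mul, abs_mul]
    have b1 : |f x - f y| * |Lam base n y| ≤ dist x y * 1 := by
      apply mul_le_mul (hfd x y) _ (abs_nonneg _) dist_nonneg
      rw [abs_of_nonneg (lam_nonneg base n y)]; exact lam_le_one base n y
    have b2 : |f x| * |Lam base n x - Lam base n y| ≤ (2:ℝ)^(n+1) * ((2:ℝ)^(1-n) * dist x y) :=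
      mul_le_mul (hfb x hx) (lam_diff base n x y) (abs_nonneg _) (by positivity)
    have : (2:ℝ)^(n+1) * ((2:ℝ)^(1-n) * dist x y) = 4 * dist x y := by
      rw [← mul_assoc, hpow]
    linarith

lemma lam_disjoint (base : M) (m n : ℤ) (hmn : 3 ≤ |m - n|) (x : M)
    (hm : Lam base m x ≠ 0) (hn : Lam base n x ≠ 0) : False := by
  obtain ⟨hm1, hm2⟩ := lam_support base m x hm
  obtain ⟨hn1, hn2⟩ := lam_support base n x hn
  rcases le_abs.mp hmn with h3 | h3
  · have h' : n + 1 ≤ m - 1 := by omega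
    have : (2:ℝ)^(n+1) ≤ 2^(m-1) := zpow_le_zpow_right₀ one_le_two h'
    linarith
  · have h' : m + 1 ≤ n - 1 := by omega
    have : (2:ℝ)^(m+1) ≤ 2^(n-1) := zpow_le_zpow_right₀ one_le_two h'
    linarith

/-- if the elements of the finite set `F ⊆ ℤ` pairwise differ by at least
`3` and each `f_n` is `1`-Lipschitz with `f_n(0) = 0`, then `g = Σ_{n∈F} f_n·Λ_n` is
Lipschitz with constant at most `15`. -/
theorem sum_tent_lipschitz (base : M) (F : Finset ℤ)
    (hsep : ∀ m ∈ F, ∀ n ∈ F, m ≠ n → 3 ≤ |m - n|)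
    (f : ℤ → M → ℝ)
    (hf : ∀ n ∈ F, LipschitzWith 1 (f n))
    (hf0 : ∀ n ∈ F, f n base = 0) :
    LipschitzWith 15 (fun x => ∑ n ∈ F, f n x * Lam base n x) := by
  classical
  apply LipschitzWith.of_dist_le_mul
  intro x y
  simp only [Real.dist_eq]
  set Ax := F.filter (fun n => Lam base n x ≠ 0) with hAx
  set Ay := F.filter (fun n => Lam base n y ≠ 0) with hAy
  set A := Ax ∪ Ay with hA
  have hsub : A ⊆ F := by
    intro n hn
    rcases Finset.mem_union.mp hn with h | h
    · exact Finset.mem_of_mem_filter n h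
    · exact Finset.mem_of_mem_filter n h
  have card_le_one : ∀ z : M, (F.filter (fun n => Lam base n z ≠ 0)).card ≤ 1 := by
    intro z
    apply Finset.card_le_one.mpr
    intro a ha b hb
    rw [Finset.mem_filter] at ha hb
    by_contra hab
    exact lam_disjoint base a b (hsep a ha.1 b hb.1 hab) z ha.2 hb.2
  have hcard : A.card ≤ 2 := by
    calc A.card ≤ Ax.card + Ay.card := Finset.card_union_le _ _
      _ ≤ 1 + 1 := add_le_add (card_le_one x) (card_le_one y)
      _ = 2 := by norm_num
  have hsum : (∑ n ∈ F, f n x * Lam base n x) - ∑ n ∈ F, f n y * Lam base n y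
      = ∑ n ∈ A, (f n x * Lam base n x - f n y * Lam base n y) := by
    rw [← Finset.sum_sub_distrib]
    symm
    apply Finset.sum_subset hsub
    intro n hn hnA
    have hx : Lam base n x = 0 := by
      by_contra hc
      exact hnA (Finset.mem_union_left _ (Finset.mem_filter.mpr ⟨hn, hc⟩))
    have hy : Lam base n y = 0 := by
      by_contra hc
      exact hnA (Finset.mem_union_right _ (Finset.mem_filter.mpr ⟨hn, hc⟩))
    simp [hx, hy]
  rw [hsum]
  calc |∑ n ∈ A, (f n x * Lam base n x - f n y * Lam base n y)|
      ≤ ∑ n ∈ A, |f n x * Lam base n x - f n y * Lam base n y| :=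
        Finset.abs_sum_le_sum_abs _ _
    _ ≤ ∑ _n ∈ A, 5 * dist x y := by
        apply Finset.sum_le_sum
        intro n hn
        exact term_diff base n x y (f n) (hf n (hsub hn)) (hf0 n (hsub hn))
    _ = A.card * (5 * dist x y) := by rw [Finset.sum_const, nsmul_eq_mul]
    _ ≤ 2 * (5 * dist x y) := by
        apply mul_le_mul_of_nonneg_right _ (by positivity)
        exact_mod_cast hcard
    _ ≤ (15 : ℝ≥0) * dist x y := by
        push_cast
        nlinarith [dist_nonneg (x := x) (y := y)]
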